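/- Let X_1,…,X_N be real random variables with E[X_i] = 0 and Cov(X_i, X_j) = δ_ij for all i, j, and let W be a real D×N matrix with columns w_1,…,w_N. Fix i with w_i ≠ 0. Then the squared Pearson correlation coefficient between X_i and the i-th component of W^T W X equals C_i(W), i.e., Cov(X_i, (W^T W X)_i)² / (Var(X_i) · Var((W^T W X)_i)) = C_i(W). -/

import Mathlib

open scoped BigOperators
open MeasureTheory ProbabilityTheory Matrix

/-- The capacity of feature `i` for an embedding matrix `W`:
`C_i = (w_i·w_i)² / (∑_j (w_i·w_j)²)`, with `C_i = 0` when `w_i = 0`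
(automatic from `0 / 0 = 0`). -/
noncomputable def capacity {D N : ℕ} (W : Matrix (Fin D) (Fin N) ℝ) (i : Fin N) : ℝ :=
  (∑ a, W a i * W a i) ^ 2 / ∑ j, (∑ a, W a i * W a j) ^ 2

/-- The covariance of two real random variables: `Cov(f,g) = E[fg] - E[f]E[g]`. -/
noncomputable def cov {Ω : Type*} [MeasurableSpace Ω] (μ : Measure Ω) (f g : Ω → ℝ) : ℝ :=
  (∫ ω, f ω * g ω ∂μ) - (∫ ω, f ω ∂μ) * (∫ ω, g ω ∂μ)

/-- If `E[Xᵢ] = 0`, `Cov(Xᵢ, Xⱼ) = δᵢⱼ`, and `wᵢ ≠ 0`, the squared Pearson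
correlation between `Xᵢ` and `(WᵀWX)ᵢ` equals the capacity `Cᵢ(W)`. -/
theorem capacity_eq_squared_correlation
    {Ω : Type*} [MeasurableSpace Ω] (μ : Measure Ω) [IsProbabilityMeasure μ]
    {N D : ℕ} (X : Fin N → Ω → ℝ) (hmeas : ∀ i, Measurable (X i))
    (hL2 : ∀ i, MemLp (X i) 2 μ)
    (h1 : ∀ i, ∫ ω, X i ω ∂μ = 0)
    (hcov : ∀ i j, cov μ (X i) (X j) = if i = j then 1 else 0)
    (W : Matrix (Fin D) (Fin N) ℝ)
    (i : Fin N) (hnz : Wᵀ i ≠ 0)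
    (Y : Ω → ℝ) (hY : ∀ ω, Y ω = ∑ j, (∑ a, W a i * W a j) * X j ω) :
    (cov μ (X i) Y) ^ 2 / (cov μ (X i) (X i) * cov μ Y Y) = capacity W i := by
  set c : Fin N → ℝ := fun j => ∑ a, W a i * W a j with hc
  have hint : ∀ j k, Integrable (fun ω => X j ω * X k ω) μ := by
    intro j k
    have hb : Integrable (fun ω => ((X j ω) ^ 2 + (X k ω) ^ 2) / 2) μ :=
      ((hL2 j).integrable_sq.add (hL2 k).integrable_sq).div_const 2
    refine Integrable.mono' hb ((hmeas j).mul (hmeas k)).aestronglyMeasurable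
      (ae_of_all _ fun ω => ?_)
    have h2 : 2 * |X j ω| * |X k ω| ≤ |X j ω| ^ 2 + |X k ω| ^ 2 := two_mul_le_add_sq _ _
    have : |X j ω * X k ω| = |X j ω| * |X k ω| := abs_mul _ _
    simp only [Real.norm_eq_abs, this]
    nlinarith [sq_abs (X j ω), sq_abs (X k ω)]
  have hXint : ∀ j, Integrable (X j) μ := fun j => (hL2 j).integrable one_le_two
  have hE : ∀ j k, (∫ ω, X j ω * X k ω ∂μ) = if j = k then 1 else 0 := by
    intro j k
    have := hcov j k
    simpa [cov, h1] using this
  have hYint : Integrable Y μ := by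
    have : Integrable (fun ω => ∑ j, c j * X j ω) μ :=
      integrable_finset_sum _ (fun j _ => (hXint j).const_mul _)
    exact this.congr (ae_of_all _ fun ω => (hY ω).symm)
  have hEY : (∫ ω, Y ω ∂μ) = 0 := by
    calc (∫ ω, Y ω ∂μ) = ∫ ω, ∑ j, c j * X j ω ∂μ := by
          congr 1; funext ω; exact hY ω
      _ = ∑ j, ∫ ω, c j * X j ω ∂μ :=
          integral_finset_sum _ (fun j _ => (hXint j).const_mul _)
      _ = 0 := by simp [integral_const_mul, h1]
  have hXiY : (∫ ω, X i ω * Y ω ∂μ) = c i := by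
    calc (∫ ω, X i ω * Y ω ∂μ) = ∫ ω, ∑ j, c j * (X i ω * X j ω) ∂μ := by
          congr 1; funext ω; rw [hY, Finset.mul_sum]
          exact Finset.sum_congr rfl fun j _ => by ring
      _ = ∑ j, ∫ ω, c j * (X i ω * X j ω) ∂μ :=
          integral_finset_sum _ (fun j _ => (hint i j).const_mul _)
      _ = ∑ j, c j * (if i = j then 1 else 0) := by
          simp_rw [integral_const_mul, hE]
      _ = c i := by simp
  have hcovXiY : cov μ (X i) Y = c i := by
    simp [cov, hXiY, h1, hEY]
  have hYY : (∫ ω, Y ω * Y ω ∂μ) = ∑ j, (c j) ^ 2 := by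
    calc (∫ ω, Y ω * Y ω ∂μ)
        = ∫ ω, ∑ j, ∑ k, (c j * c k) * (X j ω * X k ω) ∂μ := by
          congr 1; funext ω; rw [hY, Finset.sum_mul_sum]
          exact Finset.sum_congr rfl fun j _ => Finset.sum_congr rfl fun k _ => by ring
      _ = ∑ j, ∑ k, ∫ ω, (c j * c k) * (X j ω * X k ω) ∂μ := by
          rw [integral_finset_sum _ (fun j _ => integrable_finset_sum _
            (fun k _ => (hint j k).const_mul _))]
          exact Finset.sum_congr rfl fun j _ =>
            integral_finset_sum _ (fun k _ => (hint j k).const_mul _)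
      _ = ∑ j, ∑ k, (c j * c k) * (if j = k then 1 else 0) := by
          simp_rw [integral_const_mul, hE]
      _ = ∑ j, (c j) ^ 2 := by
          refine Finset.sum_congr rfl fun j _ => ?_
          simp [mul_ite, pow_two]
  have hcovYY : cov μ Y Y = ∑ j, (c j) ^ 2 := by
    simp [cov, hYY, hEY]
  have hXiXi : cov μ (X i) (X i) = 1 := by simpa using hcov i i
  rw [hcovXiY, hcovYY, hXiXi, one_mul, capacity]
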